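/- Let U_tt be the order-3 subgroup of W(E6) stabilizing two decompositions of the 27 lines that meet in type A (all pairwise intersections of their 9-line sets have size 3). Then H^1(U_tt, Pic) ≅ Z/3Z × Z/3Z, where Pic is the rank-7 permutation-induced module on the 27 line classes. -/

import Mathlib

open Finset

/-- The Picard lattice `ℤ^7` of a smooth cubic surface in the blown-up model,
with basis `l, e₁, …, e₆`. -/
abbrev Pic : Type := Fin 7 → ℤ

/-- The intersection form `diag(1, -1, …, -1)`. -/
def inter (u v : Pic) : ℤ := u 0 * v 0 - ∑ i : Fin 6, u i.succ * v i.succ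

/-- The class `l` of a general line in `P²`. -/
def lcl : Pic := fun j => if j = 0 then 1 else 0

/-- The classes `e i` of the exceptional curves. -/
def ee (i : Fin 6) : Pic := fun j => if j = i.succ then 1 else 0

/-- The 6 lines `a i = e i`. -/
def A (i : Fin 6) : Pic := ee i

/-- The 6 lines `b i = 2l - e₁ - ⋯ - e₆ + e i`. -/
def B (i : Fin 6) : Pic := (2 : ℤ) • lcl - (∑ k : Fin 6, ee k) + ee i

/-- The 15 lines `c i j = l - e i - e j`. -/
def C (i j : Fin 6) : Pic := lcl - ee i - ee j

/-- The hyperplane class `h = 3l - e₁ - ⋯ - e₆`. -/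
def hcl : Pic := (3 : ℤ) • lcl - ∑ k : Fin 6, ee k

/-- The canonical class `K = -h`. -/
def Kcl : Pic := -hcl

/-- The set of the 27 lines on a smooth cubic surface (blown-up model). -/
def lines : Finset Pic :=
  (univ.image A) ∪ (univ.image B) ∪
    ((univ ×ˢ univ : Finset (Fin 6 × Fin 6)).filter (fun p => p.1 ≠ p.2)).image
      (fun p => C p.1 p.2)

/-- The 27 lines as a type. -/
abbrev Line : Type := ↥lines

/-- The Weyl group `W(E₆)`: the permutations of the 27 lines preserving the
intersection pairing. -/
def WE6 : Subgroup (Equiv.Perm Line) where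
  carrier := {σ | ∀ x y : Line, inter (σ x).1 (σ y).1 = inter x.1 y.1}
  one_mem' := fun _ _ => rfl
  mul_mem' := by
    intro a b ha hb x y
    simpa [Equiv.Perm.mul_apply] using (ha (b x) (b y)).trans (hb x y)
  inv_mem' := by
    intro a ha x y
    have h := ha (a⁻¹ x) (a⁻¹ y)
    simpa using h.symm

/-- The subgroup of permutations of the 27 lines stabilizing a given set `P` of classes. -/
def Stab (P : Finset Pic) : Subgroup (Equiv.Perm Line) where
  carrier := {σ | ∀ x : Line, x.1 ∈ P ↔ (σ x).1 ∈ P}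
  one_mem' := fun _ => Iff.rfl
  mul_mem' := by
    intro a b ha hb x
    simpa [Equiv.Perm.mul_apply] using (hb x).trans (ha (b x))
  inv_mem' := by
    intro a ha x
    have h := ha (a⁻¹ x)
    simpa using h.symm

/-- The nine 3-element intersection sets of the two type-A decompositions
`St_{(123)(456)}` and `St_{(14)(25)(36)}` (Sarrus scheme). -/
def Iset : Fin 3 → Fin 3 → Finset Pic
  | 0, 0 => {A 0, B 1, C 0 1}
  | 0, 1 => {A 1, B 2, C 1 2}
  | 0, 2 => {A 2, B 0, C 0 2}
  | 1, 0 => {A 3, B 4, C 3 4}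
  | 1, 1 => {A 4, B 5, C 4 5}
  | 1, 2 => {A 5, B 3, C 3 5}
  | 2, 0 => {C 0 4, C 1 3, C 2 5}
  | 2, 1 => {C 0 3, C 1 5, C 2 4}
  | 2, 2 => {C 0 5, C 1 4, C 2 3}

/-- `U_tt`: the subgroup of `W(E₆)` stabilizing all nine sets `I i j`. -/
def Utt : Subgroup (Equiv.Perm Line) :=
  WE6 ⊓ ⨅ i : Fin 3, ⨅ j : Fin 3, Stab (Iset i j)


def Mmat : Matrix (Fin 7) (Fin 7) ℤ :=
  !![4,2,2,2,1,1,1; -1,-1,-1,0,0,0,0; -1,0,-1,-1,0,0,0; -1,-1,0,-1,0,0,0;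
     -2,-1,-1,-1,-1,0,-1; -2,-1,-1,-1,-1,-1,0; -2,-1,-1,-1,0,-1,-1]

def M2mat : Matrix (Fin 7) (Fin 7) ℤ :=
  !![4,1,1,1,2,2,2; -2,-1,0,-1,-1,-1,-1; -2,-1,-1,0,-1,-1,-1; -2,0,-1,-1,-1,-1,-1;
     -1,0,0,0,-1,-1,0; -1,0,0,0,0,-1,-1; -1,0,0,0,-1,0,-1]

lemma hMM2 : Mmat * M2mat = 1 := by decide
lemma hM2M : M2mat * Mmat = 1 := by decide
lemma hMsq : Mmat * Mmat = M2mat := by decide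
lemma hM_lines : ∀ v ∈ lines, Mmat.mulVec v ∈ lines := by decide
lemma hM2_lines : ∀ v ∈ lines, M2mat.mulVec v ∈ lines := by decide

lemma memA : ∀ i : Fin 6, A i ∈ lines := by decide
lemma memB : ∀ i : Fin 6, B i ∈ lines := by decide
lemma memC : ∀ i j : Fin 6, i ≠ j → C i j ∈ lines := by decide

def la (i : Fin 6) : Line := ⟨A i, memA i⟩
def lb (i : Fin 6) : Line := ⟨B i, memB i⟩
def lc (i j : Fin 6) (h : i ≠ j := by decide) : Line := ⟨C i j, memC i j h⟩

def gp : Equiv.Perm Line where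
  toFun x := ⟨Mmat.mulVec x.1, hM_lines x.1 x.2⟩
  invFun x := ⟨M2mat.mulVec x.1, hM2_lines x.1 x.2⟩
  left_inv x := Subtype.ext (by
    show M2mat.mulVec (Mmat.mulVec x.1) = x.1
    rw [Matrix.mulVec_mulVec, hM2M, Matrix.one_mulVec])
  right_inv x := Subtype.ext (by
    show Mmat.mulVec (M2mat.mulVec x.1) = x.1
    rw [Matrix.mulVec_mulVec, hMM2, Matrix.one_mulVec])

lemma hWE6_dec : ∀ x ∈ lines, ∀ y ∈ lines,
    inter (Mmat.mulVec x) (Mmat.mulVec y) = inter x y := by decide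

lemma hStab_dec : ∀ v ∈ lines, ∀ i j : Fin 3,
    (v ∈ Iset i j ↔ Mmat.mulVec v ∈ Iset i j) := by decide

lemma Utt_prop {σ : Equiv.Perm Line} (h : σ ∈ Utt) :
    (∀ x y : Line, inter (σ x).1 (σ y).1 = inter x.1 y.1) ∧
      (∀ i j : Fin 3, ∀ x : Line, x.1 ∈ Iset i j ↔ (σ x).1 ∈ Iset i j) := by
  obtain ⟨h1, h2⟩ := Subgroup.mem_inf.mp h
  refine ⟨h1, fun i j x => ?_⟩
  exact Subgroup.mem_iInf.mp (Subgroup.mem_iInf.mp h2 i) j x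

lemma gp_mem : gp ∈ Utt := by
  rw [Utt, Subgroup.mem_inf]
  constructor
  · intro x y
    exact hWE6_dec x.1 x.2 y.1 y.2
  · rw [Subgroup.mem_iInf]
    intro i
    rw [Subgroup.mem_iInf]
    intro j x
    exact hStab_dec x.1 x.2 i j

lemma pin (σ : Equiv.Perm Line)
    (hW : ∀ x y : Line, inter (σ x).1 (σ y).1 = inter x.1 y.1)
    {i j : Fin 3} (x r1 r2 : Line)
    (hmem : (σ x).1 ∈ Iset i j)
    (hr1 : σ r1 = r1) (hr2 : σ r2 = r2)
    (huniq : ∀ y ∈ Iset i j, inter y r1.1 = inter x.1 r1.1 →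
      inter y r2.1 = inter x.1 r2.1 → y = x.1) :
    σ x = x := by
  have h1 := hW x r1; rw [hr1] at h1
  have h2 := hW x r2; rw [hr2] at h2
  exact Subtype.ext (huniq _ hmem h1 h2)


lemma sigma_eq_one (σ : Equiv.Perm Line) (hσ : σ ∈ Utt) (fa0 : σ (la 0) = la 0) :
    σ = 1 := by
  obtain ⟨hW, hS⟩ := Utt_prop hσ
  have stab : ∀ (i j : Fin 3) (x : Line), x.1 ∈ Iset i j → (σ x).1 ∈ Iset i j :=
    fun i j x hx => (hS i j x).mp hx
  have fb2 : σ (lb 2) = (lb 2) :=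
    pin σ hW (lb 2) _ _ (stab 0 1 (lb 2) (by decide)) fa0 fa0 (by decide)
  have fb4 : σ (lb 4) = (lb 4) :=
    pin σ hW (lb 4) _ _ (stab 1 0 (lb 4) (by decide)) fa0 fa0 (by decide)
  have fb5 : σ (lb 5) = (lb 5) :=
    pin σ hW (lb 5) _ _ (stab 1 1 (lb 5) (by decide)) fa0 fa0 (by decide)
  have fb3 : σ (lb 3) = (lb 3) :=
    pin σ hW (lb 3) _ _ (stab 1 2 (lb 3) (by decide)) fa0 fa0 (by decide)
  have fc02 : σ (lc 0 2) = (lc 0 2) :=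
    pin σ hW (lc 0 2) _ _ (stab 0 2 (lc 0 2) (by decide)) fa0 fa0 (by decide)
  have fc03 : σ (lc 0 3) = (lc 0 3) :=
    pin σ hW (lc 0 3) _ _ (stab 2 1 (lc 0 3) (by decide)) fa0 fa0 (by decide)
  have fc04 : σ (lc 0 4) = (lc 0 4) :=
    pin σ hW (lc 0 4) _ _ (stab 2 0 (lc 0 4) (by decide)) fa0 fa0 (by decide)
  have fc05 : σ (lc 0 5) = (lc 0 5) :=
    pin σ hW (lc 0 5) _ _ (stab 2 2 (lc 0 5) (by decide)) fa0 fa0 (by decide)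
  have fa1 : σ (la 1) = (la 1) :=
    pin σ hW (la 1) _ _ (stab 0 1 (la 1) (by decide)) fa0 fc03 (by decide)
  have fc12 : σ (lc 1 2) = (lc 1 2) :=
    pin σ hW (lc 1 2) _ _ (stab 0 1 (lc 1 2) (by decide)) fa0 fc03 (by decide)
  have fb1 : σ (lb 1) = (lb 1) :=
    pin σ hW (lb 1) _ _ (stab 0 0 (lb 1) (by decide)) fa1 fb2 (by decide)
  have fc01 : σ (lc 0 1) = (lc 0 1) :=
    pin σ hW (lc 0 1) _ _ (stab 0 0 (lc 0 1) (by decide)) fa1 fa1 (by decide)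
  have fa2 : σ (la 2) = (la 2) :=
    pin σ hW (la 2) _ _ (stab 0 2 (la 2) (by decide)) fa1 fa0 (by decide)
  have fb0 : σ (lb 0) = (lb 0) :=
    pin σ hW (lb 0) _ _ (stab 0 2 (lb 0) (by decide)) fa1 fa1 (by decide)
  have fa3 : σ (la 3) = (la 3) :=
    pin σ hW (la 3) _ _ (stab 1 0 (la 3) (by decide)) fc03 fc03 (by decide)
  have fc34 : σ (lc 3 4) = (lc 3 4) :=
    pin σ hW (lc 3 4) _ _ (stab 1 0 (lc 3 4) (by decide)) fc03 fa0 (by decide)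
  have fa4 : σ (la 4) = (la 4) :=
    pin σ hW (la 4) _ _ (stab 1 1 (la 4) (by decide)) fc04 fc04 (by decide)
  have fc45 : σ (lc 4 5) = (lc 4 5) :=
    pin σ hW (lc 4 5) _ _ (stab 1 1 (lc 4 5) (by decide)) fc04 fa0 (by decide)
  have fa5 : σ (la 5) = (la 5) :=
    pin σ hW (la 5) _ _ (stab 1 2 (la 5) (by decide)) fc05 fc05 (by decide)
  have fc35 : σ (lc 3 5) = (lc 3 5) :=
    pin σ hW (lc 3 5) _ _ (stab 1 2 (lc 3 5) (by decide)) fc05 fa0 (by decide)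
  have fc13 : σ (lc 1 3) = (lc 1 3) :=
    pin σ hW (lc 1 3) _ _ (stab 2 0 (lc 1 3) (by decide)) fa1 fa1 (by decide)
  have fc25 : σ (lc 2 5) = (lc 2 5) :=
    pin σ hW (lc 2 5) _ _ (stab 2 0 (lc 2 5) (by decide)) fa1 fa0 (by decide)
  have fc15 : σ (lc 1 5) = (lc 1 5) :=
    pin σ hW (lc 1 5) _ _ (stab 2 1 (lc 1 5) (by decide)) fa1 fa1 (by decide)
  have fc24 : σ (lc 2 4) = (lc 2 4) :=
    pin σ hW (lc 2 4) _ _ (stab 2 1 (lc 2 4) (by decide)) fa1 fa0 (by decide)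
  have fc14 : σ (lc 1 4) = (lc 1 4) :=
    pin σ hW (lc 1 4) _ _ (stab 2 2 (lc 1 4) (by decide)) fa1 fa1 (by decide)
  have fc23 : σ (lc 2 3) = (lc 2 3) :=
    pin σ hW (lc 2 3) _ _ (stab 2 2 (lc 2 3) (by decide)) fa1 fa0 (by decide)
  have lines_eq : lines = {A 0, A 1, A 2, A 3, A 4, A 5, B 0, B 1, B 2, B 3, B 4, B 5, C 0 1, C 0 2, C 0 3, C 0 4, C 0 5, C 1 2, C 1 3, C 1 4, C 1 5, C 2 3, C 2 4, C 2 5, C 3 4, C 3 5, C 4 5} := by decide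
  refine Equiv.ext fun x => ?_
  have hx : x.1 ∈ ({A 0, A 1, A 2, A 3, A 4, A 5, B 0, B 1, B 2, B 3, B 4, B 5, C 0 1, C 0 2, C 0 3, C 0 4, C 0 5, C 1 2, C 1 3, C 1 4, C 1 5, C 2 3, C 2 4, C 2 5, C 3 4, C 3 5, C 4 5} : Finset Pic) := lines_eq ▸ x.2
  simp only [Finset.mem_insert, Finset.mem_singleton] at hx
  rcases hx with h|h|h|h|h|h|h|h|h|h|h|h|h|h|h|h|h|h|h|h|h|h|h|h|h|h|h
  · rw [show x = la 0 from Subtype.ext h]; exact fa0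
  · rw [show x = la 1 from Subtype.ext h]; exact fa1
  · rw [show x = la 2 from Subtype.ext h]; exact fa2
  · rw [show x = la 3 from Subtype.ext h]; exact fa3
  · rw [show x = la 4 from Subtype.ext h]; exact fa4
  · rw [show x = la 5 from Subtype.ext h]; exact fa5
  · rw [show x = lb 0 from Subtype.ext h]; exact fb0
  · rw [show x = lb 1 from Subtype.ext h]; exact fb1
  · rw [show x = lb 2 from Subtype.ext h]; exact fb2
  · rw [show x = lb 3 from Subtype.ext h]; exact fb3
  · rw [show x = lb 4 from Subtype.ext h]; exact fb4
  · rw [show x = lb 5 from Subtype.ext h]; exact fb5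
  · rw [show x = lc 0 1 from Subtype.ext h]; exact fc01
  · rw [show x = lc 0 2 from Subtype.ext h]; exact fc02
  · rw [show x = lc 0 3 from Subtype.ext h]; exact fc03
  · rw [show x = lc 0 4 from Subtype.ext h]; exact fc04
  · rw [show x = lc 0 5 from Subtype.ext h]; exact fc05
  · rw [show x = lc 1 2 from Subtype.ext h]; exact fc12
  · rw [show x = lc 1 3 from Subtype.ext h]; exact fc13
  · rw [show x = lc 1 4 from Subtype.ext h]; exact fc14
  · rw [show x = lc 1 5 from Subtype.ext h]; exact fc15
  · rw [show x = lc 2 3 from Subtype.ext h]; exact fc23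
  · rw [show x = lc 2 4 from Subtype.ext h]; exact fc24
  · rw [show x = lc 2 5 from Subtype.ext h]; exact fc25
  · rw [show x = lc 3 4 from Subtype.ext h]; exact fc34
  · rw [show x = lc 3 5 from Subtype.ext h]; exact fc35
  · rw [show x = lc 4 5 from Subtype.ext h]; exact fc45
lemma gp_la0 : gp (la 0) = lb 1 := Subtype.ext (by decide)
lemma gp_lb1 : gp (lb 1) = lc 0 1 := Subtype.ext (by decide)

lemma Utt_cases (σ : Equiv.Perm Line) (hσ : σ ∈ Utt) :
    σ = 1 ∨ σ = gp ∨ σ = gp * gp := by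
  obtain ⟨hW, hS⟩ := Utt_prop hσ
  have h00 : (σ (la 0)).1 ∈ Iset 0 0 := (hS 0 0 (la 0)).mp (by decide)
  have h3 : (σ (la 0)).1 = A 0 ∨ (σ (la 0)).1 = B 1 ∨ (σ (la 0)).1 = C 0 1 := by
    simpa [Iset] using h00
  rcases h3 with h | h | h
  · exact Or.inl (sigma_eq_one σ hσ (Subtype.ext h))
  · refine Or.inr (Or.inl ?_)
    have hτ : gp⁻¹ * σ ∈ Utt := mul_mem (inv_mem gp_mem) hσ
    have hfix : (gp⁻¹ * σ) (la 0) = la 0 := by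
      have : σ (la 0) = gp (la 0) := by rw [gp_la0]; exact Subtype.ext h
      show gp⁻¹ (σ (la 0)) = la 0
      rw [this, Equiv.Perm.inv_eq_iff_eq]
    have := sigma_eq_one _ hτ hfix
    have := inv_mul_eq_one.mp this
    exact this.symm
  · refine Or.inr (Or.inr ?_)
    have hτ : (gp * gp)⁻¹ * σ ∈ Utt := mul_mem (inv_mem (mul_mem gp_mem gp_mem)) hσ
    have hfix : ((gp * gp)⁻¹ * σ) (la 0) = la 0 := by
      have h2 : σ (la 0) = (gp * gp) (la 0) := by
        show _ = gp (gp (la 0))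
        rw [gp_la0, gp_lb1]; exact Subtype.ext h
      show (gp * gp)⁻¹ (σ (la 0)) = la 0
      rw [h2, Equiv.Perm.inv_eq_iff_eq]
    have := sigma_eq_one _ hτ hfix
    exact (inv_mul_eq_one.mp this).symm

lemma gp_ne_one : gp ≠ 1 := by
  intro h
  have := congrArg (fun e : Equiv.Perm Line => (e (la 0)).1) h
  simp only [gp_la0] at this
  exact absurd this (by decide)

lemma gpgp_ne_one : gp * gp ≠ 1 := by
  intro h
  have := congrArg (fun e : Equiv.Perm Line => (e (la 0)).1) h
  have h2 : ((gp * gp) (la 0)).1 = (la 0).1 := this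
  rw [show (gp * gp) (la 0) = lc 0 1 from by
    show gp (gp (la 0)) = _; rw [gp_la0, gp_lb1]] at h2
  exact absurd h2 (by decide)

lemma gp_ne_gpgp : gp ≠ gp * gp := by
  intro h
  have : gp = 1 := by
    have := mul_left_cancel (a := gp) (b := (1 : Equiv.Perm Line)) (c := gp)
      (by rw [mul_one]; exact h)
    exact this.symm
  exact gp_ne_one this

lemma Utt_carrier : (Utt : Set (Equiv.Perm Line)) = {1, gp, gp * gp} := by
  ext σ
  constructor
  · intro h
    simpa [Set.mem_insert_iff] using Utt_cases σ h
  · rintro (rfl | rfl | rfl)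
    · exact one_mem _
    · exact gp_mem
    · exact mul_mem gp_mem gp_mem

lemma Utt_card : Nat.card Utt = 3 := by
  have : Nat.card Utt = Nat.card (Utt : Set (Equiv.Perm Line)) := rfl
  rw [this, Utt_carrier, Nat.card_coe_set_eq,
    Set.ncard_insert_of_notMem (by
      simp only [Set.mem_insert_iff, Set.mem_singleton_iff]
      push_neg
      exact ⟨gp_ne_one.symm ∘ Eq.symm ∘ Eq.symm, fun h => gpgp_ne_one h.symm⟩)
      (Set.toFinite _),
    Set.ncard_pair gp_ne_gpgp]
open scoped Matrix
def Wmat : Matrix (Fin 7) (Fin 6) ℤ :=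
  !![-1,0,2,-2,1,-2; 1,0,-1,2,-1,2; 1,0,-2,3,-1,2; -1,1,0,-2,2,-4;
     2,-1,-1,1,-2,6; 0,0,-1,1,-1,1; 0,0,-1,1,0,-1]

def Psimat : Matrix (Fin 6) (Fin 7) ℤ :=
  !![2,3,-1,1,1,0,2; -2,1,-1,0,-1,0,-2; 1,1,0,0,0,0,0; 1,0,1,0,0,0,0;
     3,-1,3,1,1,0,0; 0,-1,1,0,0,0,-1]

def Pmat : Matrix (Fin 7) (Fin 6) ℤ :=
  !![-1,2,0,0,0,0; 0,-1,0,0,0,0; -2,0,1,-2,1,-2; 2,-2,0,1,-1,2;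
     -2,1,0,0,1,-3; 2,-1,0,0,0,1; 0,0,0,0,0,0]

def Nmat : Matrix (Fin 7) (Fin 7) ℤ :=
  !![9,3,3,3,3,3,3; -3,-1,-1,-1,-1,-1,-1; -3,-1,-1,-1,-1,-1,-1; -3,-1,-1,-1,-1,-1,-1;
     -3,-1,-1,-1,-1,-1,-1; -3,-1,-1,-1,-1,-1,-1; -3,-1,-1,-1,-1,-1,-1]

def Qmat : Matrix (Fin 7) (Fin 7) ℤ :=
  !![0,0,0,0,0,0,0; 0,0,0,0,0,0,0; 0,0,0,0,0,0,0; 0,0,0,0,0,0,0;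
     0,0,0,0,0,0,0; 0,-3,0,0,0,0,0; 0,0,0,0,0,0,0]

def Dmat : Matrix (Fin 7) (Fin 7) ℤ := Mmat - 1

def evec : Fin 6 → ℤ := fun k => if k = 0 then 3 else if k = 1 then 3 else 1

def Emat : Matrix (Fin 6) (Fin 6) ℤ := Matrix.diagonal evec

/-- rows of `Psimat` as vectors -/
def psr (k : Fin 6) : Pic := fun i => Psimat k i

def rv1 : Pic := ![-1,-2,0,0,0,0,-1]
def rv2 : Pic := ![0,-1,0,0,0,0,1]

lemma cert1 : (3:ℤ) • ((1 : Matrix (Fin 7) (Fin 7) ℤ) - Wmat * Psimat) = Qmat * Nmat := by decide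
lemma cert2 : M2mat + Mmat + 1 = Nmat := by decide
lemma cert7 : Dmat * Pmat = Wmat * Emat := by decide
lemma cert8 : M2mat - 1 = (Mmat + 1) * Dmat := by decide
lemma cert6a : Matrix.vecMul (psr 0) Dmat = (3:ℤ) • rv1 := by decide
lemma cert6b : Matrix.vecMul (psr 1) Dmat = (3:ℤ) • rv2 := by decide
lemma cert5a : Nmat.mulVec (fun i => Wmat i 0) = 0 := by decide
lemma cert5b : Nmat.mulVec (fun i => Wmat i 1) = 0 := by decide
lemma cert4a : psr 0 ⬝ᵥ (fun i => Wmat i 0) = 1 := by decide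
lemma cert4b : psr 0 ⬝ᵥ (fun i => Wmat i 1) = 0 := by decide
lemma cert4c : psr 1 ⬝ᵥ (fun i => Wmat i 0) = 0 := by decide
lemma cert4d : psr 1 ⬝ᵥ (fun i => Wmat i 1) = 1 := by decide
lemma cert9 : Mmat * (Mmat * Mmat) = 1 := by decide
lemma cert9' : (Mmat * Mmat) * Mmat = 1 := by decide

lemma reconstr (v : Pic) (h : Nmat.mulVec v = 0) :
    Wmat.mulVec (Psimat.mulVec v) = v := by
  have h1 : ((3:ℤ) • ((1 : Matrix (Fin 7) (Fin 7) ℤ) - Wmat * Psimat)).mulVec v = 0 := by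
    rw [cert1, ← Matrix.mulVec_mulVec, h, Matrix.mulVec_zero]
  rw [Matrix.smul_mulVec, Matrix.sub_mulVec, Matrix.one_mulVec,
    ← Matrix.mulVec_mulVec] at h1
  rcases smul_eq_zero.mp h1 with h2 | h2
  · norm_num at h2
  · exact (sub_eq_zero.mp h2).symm
def gU : Utt := ⟨gp, gp_mem⟩

lemma gp3 : gp * (gp * gp) = 1 := by
  refine Equiv.ext fun x => Subtype.ext ?_
  show Mmat.mulVec (Mmat.mulVec (Mmat.mulVec x.1)) = x.1
  simp only [Matrix.mulVec_mulVec, cert9, cert9', Matrix.one_mulVec]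

lemma gU3 : gU * (gU * gU) = 1 := Subtype.ext gp3
lemma gU3' : (gU * gU) * gU = 1 := (mul_assoc gU gU gU).trans gU3
lemma gU4 : (gU * gU) * (gU * gU) = gU := by rw [mul_assoc, gU3, mul_one]

lemma gU_ne_one : gU ≠ 1 := fun h => gp_ne_one (congrArg Subtype.val h)
lemma gUgU_ne_one : gU * gU ≠ 1 := fun h => gpgp_ne_one (congrArg Subtype.val h)
lemma gU_ne_gUgU : gU ≠ gU * gU := fun h => gp_ne_gpgp (congrArg Subtype.val h)

lemma Utt_cases' (τ : Utt) : τ = 1 ∨ τ = gU ∨ τ = gU * gU := by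
  rcases Utt_cases τ.1 τ.2 with h | h | h
  exacts [Or.inl (Subtype.ext h), Or.inr (Or.inl (Subtype.ext h)),
    Or.inr (Or.inr (Subtype.ext h))]

lemma single_zero_eq : (Pi.single (0 : Fin 7) (1:ℤ) : Pic) = lcl :=
  funext fun j => by rw [Pi.single_apply]; rfl

lemma single_succ_eq (k : Fin 6) : (Pi.single k.succ (1:ℤ) : Pic) = A k :=
  funext fun j => by rw [Pi.single_apply]; rfl

lemma lcl_decomp : lcl = C 0 1 + A 0 + A 1 := by decide

section
variable (ρ : Representation ℤ Utt Pic)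
  (hρ : ∀ σ : Utt, ∀ x : Line, ρ σ x.1 = ((σ : Equiv.Perm Line) x).1)

include hρ

lemma rho_g : ρ gU = Matrix.mulVecLin Mmat := by
  apply LinearMap.pi_ext
  intro i x
  have hx : (Pi.single i x : Pic) = x • Pi.single i 1 := by
    rw [← Pi.single_smul, smul_eq_mul, mul_one]
  rw [hx, map_smul, map_smul]
  congr 1
  induction i using Fin.cases with
  | zero =>
      rw [single_zero_eq, lcl_decomp, map_add, map_add]
      have e1 : ρ gU (C 0 1) = Mmat.mulVec (C 0 1) := hρ gU (lc 0 1)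
      have e2 : ρ gU (A 0) = Mmat.mulVec (A 0) := hρ gU (la 0)
      have e3 : ρ gU (A 1) = Mmat.mulVec (A 1) := hρ gU (la 1)
      rw [e1, e2, e3, Matrix.mulVecLin_apply, Matrix.mulVec_add, Matrix.mulVec_add]
  | succ k =>
      rw [single_succ_eq, Matrix.mulVecLin_apply]
      exact hρ gU (la k)

lemma rho_g_apply (u : Pic) : ρ gU u = Mmat.mulVec u := by
  rw [rho_g ρ hρ, Matrix.mulVecLin_apply]

lemma rho_gg_apply (u : Pic) : ρ (gU * gU) u = M2mat.mulVec u := by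
  rw [map_mul, Module.End.mul_apply, rho_g_apply ρ hρ, rho_g_apply ρ hρ,
    Matrix.mulVec_mulVec, hMsq]

end
def F2 : Pic →ₗ[ℤ] ZMod 3 × ZMod 3 where
  toFun v := (((psr 0 ⬝ᵥ v : ℤ) : ZMod 3), ((psr 1 ⬝ᵥ v : ℤ) : ZMod 3))
  map_add' u v := by
    simp only [dotProduct_add, Int.cast_add, Prod.mk_add_mk]
  map_smul' c v := by
    simp only [dotProduct_smul, smul_eq_mul, Int.cast_mul, RingHom.id_apply]
    rw [Prod.smul_mk, zsmul_eq_mul, zsmul_eq_mul]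

open groupCohomology in
def φmap (ρ : Representation ℤ Utt Pic) :
    cocycles₁ (Rep.of ρ) →ₗ[ℤ] ZMod 3 × ZMod 3 where
  toFun f := F2 (f gU)
  map_add' f g := by
    show F2 (f gU + g gU) = F2 (f gU) + F2 (g gU)
    rw [map_add]
  map_smul' c f := by
    show F2 (c • f gU) = c • F2 (f gU)
    rw [map_smul]
open scoped Classical in
noncomputable def ccf (v : Pic) : Utt → Pic :=
  fun σ => if σ = gU * gU then Mmat.mulVec v + v else if σ = gU then v else 0

lemma ccf_one (v : Pic) : ccf v 1 = 0 := by
  rw [ccf, if_neg (Ne.symm gUgU_ne_one), if_neg (Ne.symm gU_ne_one)]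

lemma ccf_g (v : Pic) : ccf v gU = v := by
  rw [ccf, if_neg gU_ne_gUgU, if_pos rfl]

lemma ccf_gg (v : Pic) : ccf v (gU * gU) = Mmat.mulVec v + v := by
  rw [ccf, if_pos rfl]

lemma sumM_zero (v : Pic) (hv : Nmat.mulVec v = 0) :
    M2mat.mulVec v + Mmat.mulVec v + v = 0 := by
  have h : (M2mat + Mmat + 1).mulVec v = Nmat.mulVec v := by rw [cert2]
  rw [Matrix.add_mulVec, Matrix.add_mulVec, Matrix.one_mulVec, hv] at h
  exact h

lemma M2v_eq (v : Pic) (hv : Nmat.mulVec v = 0) :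
    M2mat.mulVec v = -(Mmat.mulVec v + v) := by
  have h := sumM_zero v hv
  rw [add_assoc] at h
  exact eq_neg_of_add_eq_zero_left h

lemma rho_of_apply (ρ : Representation ℤ Utt Pic) (g : Utt) (u : Rep.of ρ) :
    (Rep.of ρ).ρ g u = ρ g u := rfl

open groupCohomology in
noncomputable def cocyc (ρ : Representation ℤ Utt Pic)
    (hρ : ∀ σ : Utt, ∀ x : Line, ρ σ x.1 = ((σ : Equiv.Perm Line) x).1)
    (v : Pic) (hv : Nmat.mulVec v = 0) : cocycles₁ (Rep.of ρ) := by
  refine ⟨ccf v, ?_⟩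
  rw [mem_cocycles₁_iff]
  intro g h
  rcases Utt_cases' g with rfl | rfl | rfl <;> rcases Utt_cases' h with rfl | rfl | rfl <;>
    simp only [one_mul, mul_one, gU3, gU3', gU4, ccf_one, ccf_g, ccf_gg, rho_of_apply,
      map_zero, map_one, Module.End.one_apply, add_zero, zero_add,
      rho_g_apply ρ hρ, rho_gg_apply ρ hρ, Matrix.mulVec_add, Matrix.mulVec_mulVec,
      hMsq, hM2M, Matrix.one_mulVec, M2v_eq v hv, Matrix.mulVec_zero] <;>
    abel
open groupCohomology in
lemma coboundary_iff (ρ : Representation ℤ Utt Pic) (f : cocycles₁ (Rep.of ρ)) :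
    ⇑f ∈ coboundaries₁ (Rep.of ρ) ↔ ∃ w : Pic, ∀ g : Utt, ρ g w - w = ⇑f g := by
  exact ⟨fun ⟨x, hx⟩ => ⟨x, fun g => congrFun hx g⟩, fun ⟨x, hx⟩ => ⟨x, funext hx⟩⟩

open groupCohomology in
lemma cocycle_prop (ρ : Representation ℤ Utt Pic) (f : cocycles₁ (Rep.of ρ)) :
    ∀ g h : Utt, (⇑f (g * h) : Pic) = ρ g (show Pic from ⇑f h) + (show Pic from ⇑f g) :=
  fun g h => (mem_cocycles₁_iff (⇑f)).1 f.2 g h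

lemma phi_surj (ρ : Representation ℤ Utt Pic)
    (hρ : ∀ σ : Utt, ∀ x : Line, ρ σ x.1 = ((σ : Equiv.Perm Line) x).1) :
    Function.Surjective (φmap ρ) := by
  intro z
  obtain ⟨a, ha⟩ := ZMod.intCast_surjective (n := 3) z.1
  obtain ⟨b, hb⟩ := ZMod.intCast_surjective (n := 3) z.2
  set v : Pic := a • (fun i => Wmat i 0) + b • (fun i => Wmat i 1) with hvdef
  have hv : Nmat.mulVec v = 0 := by
    rw [hvdef, Matrix.mulVec_add, Matrix.mulVec_smul, Matrix.mulVec_smul, cert5a, cert5b,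
      smul_zero, smul_zero, add_zero]
  refine ⟨cocyc ρ hρ v hv, ?_⟩
  have he : φmap ρ (cocyc ρ hρ v hv) =
      (((psr 0 ⬝ᵥ v : ℤ) : ZMod 3), ((psr 1 ⬝ᵥ v : ℤ) : ZMod 3)) := by
    show F2 (ccf v gU) = _
    rw [ccf_g]
    rfl
  have c0 : psr 0 ⬝ᵥ v = a := by
    rw [hvdef, dotProduct_add, dotProduct_smul, dotProduct_smul,
      cert4a, cert4b, smul_eq_mul, smul_eq_mul, mul_one, mul_zero, add_zero]
  have c1 : psr 1 ⬝ᵥ v = b := by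
    rw [hvdef, dotProduct_add, dotProduct_smul, dotProduct_smul,
      cert4c, cert4d, smul_eq_mul, smul_eq_mul, mul_one, mul_zero, zero_add]
  rw [he, c0, c1, ha, hb]

open groupCohomology in
lemma phi_ker (ρ : Representation ℤ Utt Pic)
    (hρ : ∀ σ : Utt, ∀ x : Line, ρ σ x.1 = ((σ : Equiv.Perm Line) x).1) :
    LinearMap.ker (H1π (Rep.of ρ)).hom = LinearMap.ker (φmap ρ) := by
  ext f
  rw [LinearMap.mem_ker, LinearMap.mem_ker, H1π_eq_zero_iff, coboundary_iff]
  constructor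
  · rintro ⟨x, hx⟩
    have hface : ⇑f gU = Dmat.mulVec x := by
      rw [← hx gU, rho_g_apply ρ hρ]
      simp only [Dmat, Matrix.sub_mulVec, Matrix.one_mulVec]
    have k0 : psr 0 ⬝ᵥ Dmat.mulVec x = 3 * (rv1 ⬝ᵥ x) := by
      rw [Matrix.dotProduct_mulVec, cert6a, smul_dotProduct, smul_eq_mul]
    have k1 : psr 1 ⬝ᵥ Dmat.mulVec x = 3 * (rv2 ⬝ᵥ x) := by
      rw [Matrix.dotProduct_mulVec, cert6b, smul_dotProduct, smul_eq_mul]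
    show F2 (⇑f gU) = 0
    rw [hface]
    show (((psr 0 ⬝ᵥ Dmat.mulVec x : ℤ) : ZMod 3), ((psr 1 ⬝ᵥ Dmat.mulVec x : ℤ) : ZMod 3))
      = 0
    rw [k0, k1, Int.cast_mul, Int.cast_mul,
      show ((3:ℤ) : ZMod 3) = 0 from by decide, zero_mul, zero_mul]
    rfl
  · intro hf
    have hc := cocycle_prop ρ f
    set v : Pic := ⇑f gU with hvdef
    have hgg : ⇑f (gU * gU) = Mmat.mulVec v + v := by
      have h2 := hc gU gU
      rw [rho_g_apply ρ hρ] at h2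
      exact h2
    have h1 : ⇑f 1 = 0 := cocycles₁_map_one f
    have hNv : Nmat.mulVec v = 0 := by
      have h2 := hc gU (gU * gU)
      rw [gU3, h1, hgg, rho_g_apply ρ hρ, Matrix.mulVec_add,
        Matrix.mulVec_mulVec, hMsq] at h2
      rw [← cert2, Matrix.add_mulVec, Matrix.add_mulVec, Matrix.one_mulVec]
      exact h2.symm
    have hz0 : ((psr 0 ⬝ᵥ v : ℤ) : ZMod 3) = 0 := congrArg Prod.fst hf
    have hz1 : ((psr 1 ⬝ᵥ v : ℤ) : ZMod 3) = 0 := congrArg Prod.snd hf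
    obtain ⟨s, hs0⟩ := (ZMod.intCast_zmod_eq_zero_iff_dvd _ 3).mp hz0
    obtain ⟨t, ht0⟩ := (ZMod.intCast_zmod_eq_zero_iff_dvd _ 3).mp hz1
    have hs : psr 0 ⬝ᵥ v = 3 * s := by exact_mod_cast hs0
    have ht : psr 1 ⬝ᵥ v = 3 * t := by exact_mod_cast ht0
    set cc : Fin 6 → ℤ :=
      fun k => if k = 0 then s else if k = 1 then t else Psimat.mulVec v k with hcc
    set w : Pic := Pmat.mulVec cc with hw
    have hEcc : Emat.mulVec cc = Psimat.mulVec v := by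
      funext k
      rw [Emat, Matrix.mulVec_diagonal]
      by_cases h0 : k = 0
      · subst h0
        show evec 0 * cc 0 = Psimat.mulVec v 0
        rw [show cc 0 = s from rfl, show evec 0 = 3 from rfl]
        exact hs.symm
      · by_cases hone : k = 1
        · subst hone
          show evec 1 * cc 1 = Psimat.mulVec v 1
          rw [show cc 1 = t from rfl, show evec 1 = 3 from rfl]
          exact ht.symm
        · show evec k * cc k = Psimat.mulVec v k
          rw [show evec k = 1 from by rw [evec, if_neg h0, if_neg hone],
            show cc k = Psimat.mulVec v k from by
              show (if k = 0 then s else if k = 1 then t else Psimat.mulVec v k) = _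
              rw [if_neg h0, if_neg hone],
            one_mul]
    have hDw : Dmat.mulVec w = v := by
      rw [hw, Matrix.mulVec_mulVec, cert7, ← Matrix.mulVec_mulVec, hEcc, reconstr v hNv]
    refine ⟨w, fun g => ?_⟩
    rcases Utt_cases' g with rfl | rfl | rfl
    · rw [map_one, Module.End.one_apply, sub_self, h1]
    · rw [rho_g_apply ρ hρ]
      have e : Mmat.mulVec w - w = Dmat.mulVec w := by
        simp only [Dmat, Matrix.sub_mulVec, Matrix.one_mulVec]
      rw [e, hDw]
    · rw [rho_gg_apply ρ hρ]
      have e : M2mat.mulVec w - w = Mmat.mulVec v + v := by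
        have e1 : M2mat.mulVec w - w = (M2mat - 1).mulVec w := by
          rw [Matrix.sub_mulVec, Matrix.one_mulVec]
        rw [e1, cert8, ← Matrix.mulVec_mulVec, hDw, Matrix.add_mulVec, Matrix.one_mulVec]
      rw [e]
      exact hgg.symm

/-- `U_tt` has order 3 and `H¹(U_tt, Pic) ≅ ℤ/3ℤ × ℤ/3ℤ`, where `Pic` is the rank-7
permutation-induced module on the 27 line classes. -/
theorem stmt16 (ρ : Representation ℤ Utt Pic)
    (hρ : ∀ σ : Utt, ∀ x : Line, ρ σ x.1 = ((σ : Equiv.Perm Line) x).1) :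
    Nat.card Utt = 3 ∧
    Nonempty (groupCohomology.H1 (Rep.of ρ) ≃+ (ZMod 3 × ZMod 3)) := by 
  have e : groupCohomology.H1 (Rep.of ρ) ≃ₗ[ℤ] ZMod 3 × ZMod 3 :=
    ((groupCohomology.H1π (Rep.of ρ)).hom.quotKerEquivOfSurjective
      ((ModuleCat.epi_iff_surjective _).1 inferInstance)).symm.trans
    ((Submodule.quotEquivOfEq _ _ (phi_ker ρ hρ)).trans
      ((φmap ρ).quotKerEquivOfSurjective (phi_surj ρ hρ)))
  exact ⟨Utt_card, ⟨e.toAddEquiv⟩⟩
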